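/- arXiv:1111.2269 — 3 statements merged into one kernel-verified Lean document; each statement's English description precedes it below -/
import Mathlib

section
/- Let ν, δ, κ, α > 0 and let N be a positive integer with N² ≥ (8/7)·(α²ν/κ). Then there exist no integers k, l with |k| > N and |l| > N such that ρ_k + ρ_l = ρ_{k+l}. (In the paper's notation: the second resonant index set R₂(j) of the renormalization-group analysis of the generalized Kuramoto–Sivashinsky equation is empty.) -/
/-- The eigenvalue (symbol) `ρ_k = -ν (k/α)² - i δ (k/α)³ + κ (k/α)⁴` of the linear part of the
generalized Kuramoto–Sivashinsky equation acting on the Fourier mode `e^{i(k/α)x}`. -/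
noncomputable def gksEig (ν δ κ α : ℝ) (k : ℤ) : ℂ :=
  -(ν : ℂ) * ((k : ℂ) / (α : ℂ)) ^ 2 - Complex.I * (δ : ℂ) * ((k : ℂ) / (α : ℂ)) ^ 3
    + (κ : ℂ) * ((k : ℂ) / (α : ℂ)) ^ 4

lemma gksEig_eq (ν δ κ α : ℝ) (k : ℤ) :
    gksEig ν δ κ α k = Complex.ofReal (-ν * ((k : ℝ) / α) ^ 2 + κ * ((k : ℝ) / α) ^ 4)
      - Complex.I * Complex.ofReal (δ * ((k : ℝ) / α) ^ 3) := by
  simp only [gksEig]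
  push_cast
  ring

set_option maxHeartbeats 1000000 in
/-- The second resonant index set `R₂(j)` is empty: if `N² ≥ (8/7)·(α²ν/κ)`, there are no
integers `k, l` with `|k| > N`, `|l| > N` and `ρ_k + ρ_l = ρ_{k+l}`. -/
theorem stmt_0 (ν δ κ α : ℝ) (hν : 0 < ν) (hδ : 0 < δ) (hκ : 0 < κ) (hα : 0 < α)
    (N : ℕ) (hN : 0 < N) (hN2 : (N : ℝ) ^ 2 ≥ (8 / 7) * (α ^ 2 * ν / κ)) :
    ¬ ∃ k l : ℤ, (N : ℤ) < |k| ∧ (N : ℤ) < |l| ∧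
      gksEig ν δ κ α k + gksEig ν δ κ α l = gksEig ν δ κ α (k + l) := by
  rintro ⟨k, l, hk, hl, heq⟩
  rw [gksEig_eq, gksEig_eq, gksEig_eq] at heq
  set x : ℝ := (k : ℝ) with hx
  set y : ℝ := (l : ℝ) with hy
  have hkl : ((k + l : ℤ) : ℝ) = x + y := by push_cast; ring
  rw [hkl] at heq
  have hα0 : α ≠ 0 := ne_of_gt hα
  have hk0 : k ≠ 0 := by
    intro h; rw [h] at hk; simp at hk; omega
  have hl0 : l ≠ 0 := by
    intro h; rw [h] at hl; simp at hl; omega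
  have hx0 : x ≠ 0 := Int.cast_ne_zero.mpr hk0
  have hy0 : y ≠ 0 := Int.cast_ne_zero.mpr hl0
  have him : δ * (x / α) ^ 3 + δ * (y / α) ^ 3 = δ * ((x + y) / α) ^ 3 := by
    have h := congrArg Complex.im heq
    simp only [Complex.add_im, Complex.sub_im, Complex.mul_im, Complex.ofReal_im,
      Complex.ofReal_re, Complex.I_re, Complex.I_im] at h
    linarith
  have hre : -ν * (x / α) ^ 2 + κ * (x / α) ^ 4 + (-ν * (y / α) ^ 2 + κ * (y / α) ^ 4)
      = -ν * ((x + y) / α) ^ 2 + κ * ((x + y) / α) ^ 4 := by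
    have h := congrArg Complex.re heq
    simp only [Complex.add_re, Complex.sub_re, Complex.mul_re, Complex.ofReal_im,
      Complex.ofReal_re, Complex.I_re, Complex.I_im] at h
    linarith
  -- from imaginary part: x*y*(x+y) = 0
  have h3 : x * y * (x + y) = 0 := by
    have hδ0 : δ ≠ 0 := ne_of_gt hδ
    field_simp at him
    nlinarith [him]
  have hxy : x + y = 0 := by
    rcases mul_eq_zero.mp h3 with h | h
    · rcases mul_eq_zero.mp h with h | h
      · exact absurd h hx0
      · exact absurd h hy0
    · exact h
  have hyx : y = -x := by linarith
  rw [hyx] at hre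
  have hre2 : ν * x ^ 2 * α ^ 4 = κ * x ^ 4 * α ^ 2 := by
    field_simp at hre
    have h' : x ^ 2 * κ = ν * α ^ 2 := by ring_nf at hre; linarith
    linear_combination (-(x ^ 2 * α ^ 2)) * h'
  have hre' : ν * x ^ 2 * α ^ 2 = κ * x ^ 4 := by
    have h2 : (ν * x ^ 2 * α ^ 2) * α ^ 2 = (κ * x ^ 4) * α ^ 2 := by ring_nf; ring_nf at hre2; linarith
    exact mul_right_cancel₀ (pow_ne_zero 2 hα0) h2
  have hxN : (N : ℝ) ^ 2 < x ^ 2 := by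
    have h1 : (N : ℤ) ^ 2 < k ^ 2 := by
      have h := pow_lt_pow_left₀ hk (by positivity : (0:ℤ) ≤ (N:ℤ)) two_ne_zero
      simpa [sq_abs] using h
    have h2 : ((N : ℤ) : ℝ) ^ 2 < ((k : ℤ) : ℝ) ^ 2 := by exact_mod_cast h1
    simpa using h2
  have hx2 : (8 / 7) * (α ^ 2 * ν / κ) < x ^ 2 := lt_of_le_of_lt hN2 hxN
  have hfrac : 0 < α ^ 2 * ν / κ := by positivity
  have hlt : α ^ 2 * ν / κ < x ^ 2 := by linarith
  have hlt2 : α ^ 2 * ν < κ * x ^ 2 := by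
    rw [div_lt_iff₀ hκ] at hlt; linarith [hlt]
  have hxpos : 0 < x ^ 2 := by positivity
  nlinarith [hre', hlt2, hxpos]
end

section
/- Let ν, κ, α > 0 and set r := α²ν/κ. If k, l are integers with k·l ≠ 0, j := k + l, and the real-part resonance identity −ν((k/α)² + (l/α)²) + κ((k/α)⁴ + (l/α)⁴) = −ν(j/α)² + κ(j/α)⁴ holds, then r − 3kl = 2(k² + l²). -/
/-- Derivation of equation (star) in the appendix: the real parts of the resonance condition
`ρ_k + ρ_l = ρ_j` with `j = k + l` and `k·l ≠ 0` reduce to `r - 3kl = 2(k² + l²)`,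
where `r = α²ν/κ`. -/
theorem stmt_1 (ν κ α : ℝ) (hν : 0 < ν) (hκ : 0 < κ) (hα : 0 < α)
    (r : ℝ) (hr : r = α ^ 2 * ν / κ) (k l : ℤ) (hkl : k * l ≠ 0) (j : ℤ) (hj : j = k + l)
    (hres : -ν * (((k : ℝ) / α) ^ 2 + ((l : ℝ) / α) ^ 2)
        + κ * (((k : ℝ) / α) ^ 4 + ((l : ℝ) / α) ^ 4)
      = -ν * ((j : ℝ) / α) ^ 2 + κ * ((j : ℝ) / α) ^ 4) :
    r - 3 * ((k : ℝ) * (l : ℝ)) = 2 * ((k : ℝ) ^ 2 + (l : ℝ) ^ 2) := by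
  subst hj hr
  have hα' : (α : ℝ) ≠ 0 := ne_of_gt hα
  have hκ' : (κ : ℝ) ≠ 0 := ne_of_gt hκ
  have hkl' : (k : ℝ) * (l : ℝ) ≠ 0 := by
    exact_mod_cast (Int.cast_ne_zero (α := ℝ)).mpr hkl
  push_cast at hres ⊢
  field_simp at hres ⊢
  have key : (2 * ((k:ℝ)*l) * α ^ 2) * (ν * α ^ 2) = (2 * ((k:ℝ)*l) * α ^ 2) * (κ * (2*(k:ℝ)^2 + 3*(k:ℝ)*(l:ℝ) + 2*(l:ℝ)^2)) := by
    ring_nf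
    ring_nf at hres
    linear_combination α ^ 2 * hres
  have h2 : (2 * ((k:ℝ)*l) * α ^ 2) ≠ 0 := by
    apply mul_ne_zero
    · simpa using hkl'
    · positivity
  have := mul_left_cancel₀ h2 key
  nlinarith [this]
end

section
/- Let ν, δ, κ, α > 0, let N be a positive integer with N² ≥ 2να²/κ, let l be an integer with |l| > N, and let t ≥ 0. Then e^{−(Re ρ_l) t} · N⁴ / |ρ_l| ≤ (2α⁴/κ) · e^{−(κ/(2α⁴)) N⁴ t}. (This is the bound on |e^{−ρ_l t} / (ρ_l/N⁴)| used to prove the exponential estimate ‖P_N F_NR(t/ε, U(t))‖ ≤ C₂ e^{−c₁N⁴t} of Lemma 3.1.) -/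
lemma gksEig_re (ν δ κ α : ℝ) (k : ℤ) :
    (gksEig ν δ κ α k).re = -ν * ((k : ℝ) / α) ^ 2 + κ * ((k : ℝ) / α) ^ 4 := by
  have hx : ((k : ℂ) / (α : ℂ)) = (((k : ℝ) / α : ℝ) : ℂ) := by push_cast; ring
  unfold gksEig
  rw [hx]
  generalize ((k : ℝ) / α) = r
  simp [← Complex.ofReal_pow, Complex.sub_re, Complex.add_re, Complex.mul_re,
    Complex.I_re, Complex.I_im]

/-- The bound `e^{−(Re ρ_l)t}·N⁴/|ρ_l| ≤ (2α⁴/κ)·e^{−(κ/(2α⁴))N⁴ t}` for `|l| > N`,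
`N² ≥ 2να²/κ` and `t ≥ 0`, used in the proof of Lemma 3.1. -/
theorem stmt_9 (ν δ κ α : ℝ) (hν : 0 < ν) (hδ : 0 < δ) (hκ : 0 < κ) (hα : 0 < α)
    (N : ℕ) (hN : 0 < N) (hN2 : (N : ℝ) ^ 2 ≥ 2 * ν * α ^ 2 / κ)
    (l : ℤ) (hl : (N : ℤ) < |l|) (t : ℝ) (ht : 0 ≤ t) :
    Real.exp (-(gksEig ν δ κ α l).re * t) * (N : ℝ) ^ 4 / ‖gksEig ν δ κ α l‖
      ≤ (2 * α ^ 4 / κ) * Real.exp (-(κ / (2 * α ^ 4)) * (N : ℝ) ^ 4 * t) := by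
  set x : ℝ := (l : ℝ) / α with hxdef
  have hα2 : (0:ℝ) < α ^ 2 := by positivity
  have hα4 : (0:ℝ) < α ^ 4 := by positivity
  -- l² ≥ N² over ℝ
  have hlN : ((N : ℝ)) ^ 2 ≤ (l : ℝ) ^ 2 := by
    have h1 : (N : ℤ) ^ 2 ≤ l ^ 2 := by
      have := sq_abs l
      nlinarith [abs_nonneg l, hl]
    exact_mod_cast h1
  have hx2 : (N : ℝ) ^ 2 / α ^ 2 ≤ x ^ 2 := by
    rw [hxdef, div_pow]
    exact div_le_div_of_nonneg_right hlN hα2.le |>.trans_eq rfl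
  have hx2' : 2 * ν / κ ≤ x ^ 2 := by
    have : 2 * ν / κ ≤ (N : ℝ) ^ 2 / α ^ 2 := by
      rw [div_le_div_iff₀ hκ hα2]
      have := hN2
      rw [ge_iff_le, div_le_iff₀ hκ] at this
      nlinarith
    linarith
  have hνx : ν ≤ κ * x ^ 2 / 2 := by
    rw [le_div_iff₀ (by norm_num : (0:ℝ) < 2)]
    rw [div_le_iff₀ hκ] at hx2'
    nlinarith
  have hx4 : (N : ℝ) ^ 4 / α ^ 4 ≤ x ^ 4 := by
    have : x ^ 4 = (x ^ 2) ^ 2 := by ring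
    rw [this]
    have h0 : (0:ℝ) ≤ (N : ℝ) ^ 2 / α ^ 2 := by positivity
    have := pow_le_pow_left₀ h0 hx2 2
    calc (N : ℝ) ^ 4 / α ^ 4 = ((N : ℝ) ^ 2 / α ^ 2) ^ 2 := by ring
      _ ≤ (x ^ 2) ^ 2 := this
  set A : ℝ := κ / (2 * α ^ 4) * (N : ℝ) ^ 4 with hAdef
  have hA : 0 < A := by positivity
  have hre : (gksEig ν δ κ α l).re = -ν * x ^ 2 + κ * x ^ 4 := gksEig_re ν δ κ α l
  have hReA : A ≤ (gksEig ν δ κ α l).re := by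
    rw [hre]
    have h1 : κ * x ^ 4 / 2 ≤ -ν * x ^ 2 + κ * x ^ 4 := by nlinarith [sq_nonneg x]
    have h2 : A ≤ κ * x ^ 4 / 2 := by
      rw [hAdef]
      calc κ / (2 * α ^ 4) * (N : ℝ) ^ 4 = κ / 2 * ((N:ℝ)^4 / α ^ 4) := by ring
        _ ≤ κ / 2 * x ^ 4 := mul_le_mul_of_nonneg_left hx4 (by positivity)
        _ = κ * x ^ 4 / 2 := by ring
    linarith
  have habs : A ≤ ‖gksEig ν δ κ α l‖ :=
    le_trans hReA (Complex.re_le_norm _)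
  have hexp : Real.exp (-(gksEig ν δ κ α l).re * t) ≤ Real.exp (-A * t) := by
    apply Real.exp_le_exp.mpr
    nlinarith
  have hnum : Real.exp (-(gksEig ν δ κ α l).re * t) * (N : ℝ) ^ 4
      ≤ Real.exp (-A * t) * (N : ℝ) ^ 4 := by
    apply mul_le_mul_of_nonneg_right hexp (by positivity)
  have : Real.exp (-(gksEig ν δ κ α l).re * t) * (N : ℝ) ^ 4 / ‖gksEig ν δ κ α l‖
      ≤ Real.exp (-A * t) * (N : ℝ) ^ 4 / A :=
    div_le_div₀ (by positivity) hnum hA habs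
  refine this.trans_eq ?_
  rw [hAdef]
  have hNpos : (0:ℝ) < (N:ℝ)^4 := by positivity
  field_simp
end
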